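/- Let X₀ and X₁ be finite types, let μ⁰ ∈ Δ_{X₀} and μ¹ ∈ Δ_{X₁}, and let S₀ ⊆ X₀ and S₁ ⊆ X₁ be such that μ⁰(S₀) = μ¹(S₁). Then there exists a measure μ² ∈ Δ_{X₀ × X₁} such that μ²_{X₀} = μ⁰, μ²_{X₁} = μ¹, and μ²((S₀ × S₁) ∪ (S₀ᶜ × S₁ᶜ)) = 1. -/
import Mathlib


/-- A probability measure (probability mass function) on a finite type. -/
structure PM (X : Type) [Fintype X] where
  pm : X → ℝ
  nonneg : ∀ x, 0 ≤ pm x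
  total : ∑ x, pm x = 1

namespace PM

variable {X Y : Type} [Fintype X] [Fintype Y]

/-- The probability of a set `S`: `μ(S) = ∑_{x ∈ S} μ(x)`. -/
noncomputable def prob (μ : PM X) (S : Set X) : ℝ := ∑ x, S.indicator μ.pm x

lemma prob_nonneg (μ : PM X) (S : Set X) : 0 ≤ μ.prob S :=
  Finset.sum_nonneg fun x _ => Set.indicator_apply_nonneg fun _ => μ.nonneg x

/-- Marginal on the first component: `μ_X(A) = μ(A × Y)`. -/
noncomputable def margFst (μ : PM (X × Y)) : PM X where
  pm x := ∑ y, μ.pm (x, y)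
  nonneg x := Finset.sum_nonneg fun y _ => μ.nonneg (x, y)
  total := by rw [← μ.total, ← Fintype.sum_prod_type]

/-- Marginal on the second component: `μ_Y(B) = μ(X × B)`. -/
noncomputable def margSnd (μ : PM (X × Y)) : PM Y where
  pm y := ∑ x, μ.pm (x, y)
  nonneg y := Finset.sum_nonneg fun x _ => μ.nonneg (x, y)
  total := by rw [← μ.total, ← Fintype.sum_prod_type_right]

/-- Conditioning `μ|S`; the junk value `μ` is returned when `μ(S) = 0`. -/
noncomputable def cond (μ : PM X) (S : Set X) : PM X :=
  if h : 0 < μ.prob S then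
    { pm := fun x => S.indicator μ.pm x / μ.prob S
      nonneg := fun x =>
        div_nonneg (Set.indicator_apply_nonneg fun _ => μ.nonneg x) (le_of_lt h)
      total := by
        rw [← Finset.sum_div]
        exact div_self (ne_of_gt h) }
  else μ

end PM

open PM

/-- An `X`-inference procedure: a partial map on sets of probability measures. -/
structure InfProc (X : Type) [Fintype X] where
  dom : Set (Set (PM X))
  map : Set (PM X) → Set (PM X)
  map_subset : ∀ A ∈ dom, map A ⊆ A
  map_empty_iff : ∀ A ∈ dom, (map A = ∅ ↔ A = ∅)

/-- `KB ⊢_I θ`. -/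
def Infers {X : Type} [Fintype X] (I : InfProc X) (KB θ : Set (PM X)) : Prop :=
  I.map KB ⊆ θ

section Lift

variable {X Y : Type} [Fintype X] [Fintype Y]

/-- A constraint on `Δ_X` viewed as a constraint on `Δ_{X×Y}`: `KB↑`. -/
def liftKB (Y : Type) [Fintype Y] (KB : Set (PM X)) : Set (PM (X × Y)) :=
  {μ | margFst μ ∈ KB}

/-- `proj_X(B) = {μ_X : μ ∈ B}`. -/
def projFst (B : Set (PM (X × Y))) : Set (PM X) := margFst '' B

/-- `ψ ⊆ Δ_{X×Y}` is `X`-conservative over `KB ⊆ Δ_X`. -/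
def Conservative (KB : Set (PM X)) (ψ : Set (PM (X × Y))) : Prop :=
  projFst (liftKB Y KB ∩ ψ) = KB

end Lift

/-- Robustness of a finitary inference procedure. -/
def Robust (I : ∀ (X : Type) [Fintype X], InfProc X) : Prop :=
  ∀ (X Y : Type) [Fintype X] [Fintype Y], ∀ KB φ : Set (PM X),
    KB ∈ (I X).dom → ∀ ψ : Set (PM (X × Y)), Conservative KB ψ →
      (Infers (I X) KB φ ↔ Infers (I (X × Y)) (liftKB Y KB ∩ ψ) (liftKB Y φ))

/-- An inference procedure is essentially entailment. -/
def EssEntail {X : Type} [Fintype X] (I : InfProc X) : Prop :=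
  ∀ KB ∈ I.dom, ∀ (S : Set X) (α β : ℝ),
    Infers I KB {μ | α < μ.prob S ∧ μ.prob S < β} →
    KB ⊆ {μ | α ≤ μ.prob S ∧ μ.prob S ≤ β}

def DI1 (I : ∀ (X : Type) [Fintype X], InfProc X) : Prop :=
  ∀ (X : Type) [Fintype X], ∀ (S : Set X) (α β : ℝ), α ≤ β →
    {μ : PM X | α ≤ μ.prob S ∧ μ.prob S ≤ β} ∈ (I X).dom

def DI2 (I : ∀ (X : Type) [Fintype X], InfProc X) : Prop :=
  ∀ (X Y : Type) [Fintype X] [Fintype Y], ∀ KB : Set (PM X),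
    KB ∈ (I X).dom → liftKB Y KB ∈ (I (X × Y)).dom

def DI3 (I : ∀ (X : Type) [Fintype X], InfProc X) : Prop :=
  ∀ (X : Type) [Fintype X], ∀ KB₁ KB₂ : Set (PM X),
    KB₁ ∈ (I X).dom → KB₂ ∈ (I X).dom → KB₁ ∩ KB₂ ∈ (I X).dom

/-- An `X`-`Y` embedding: a homomorphism of set algebras. -/
structure Emb (X Y : Type) where
  f : Set X → Set Y
  map_union : ∀ S T, f (S ∪ T) = f S ∪ f T
  map_compl : ∀ S, f Sᶜ = (f S)ᶜ

/-- A faithful embedding. -/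
def Emb.Faithful {X Y : Type} (e : Emb X Y) : Prop :=
  ∀ S T : Set X, S ⊆ T ↔ e.f S ⊆ e.f T

section Embeddings

variable {X Y : Type} [Fintype X] [Fintype Y]

/-- `μ` and `ν` correspond under `f`. -/
def Corr (e : Emb X Y) (μ : PM X) (ν : PM Y) : Prop :=
  ∀ S : Set X, μ.prob S = ν.prob (e.f S)

/-- `f*(D)`, the union over `μ ∈ D` of the measures corresponding to `μ`. -/
def fstar (e : Emb X Y) (D : Set (PM X)) : Set (PM Y) :=
  {ν | ∃ μ ∈ D, Corr e μ ν}

/-- Sets of measures `D_X` and `D_Y` correspond under `f`. -/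
def SetCorr (e : Emb X Y) (DX : Set (PM X)) (DY : Set (PM Y)) : Prop :=
  (∀ ν ∈ DY, ∃ μ ∈ DX, Corr e μ ν) ∧ (∀ μ ∈ DX, ∃ ν ∈ DY, Corr e μ ν)

end Embeddings

/-- Representation independence of a finitary inference procedure. -/
def RepInd (I : ∀ (X : Type) [Fintype X], InfProc X) : Prop :=
  ∀ (X Y : Type) [Fintype X] [Fintype Y] (e : Emb X Y), e.Faithful →
    (∀ KB : Set (PM X), KB ∈ (I X).dom ↔ fstar e KB ∈ (I Y).dom) ∧
    (∀ KB : Set (PM X), KB ∈ (I X).dom → ∀ θ : Set (PM X),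
      (Infers (I X) KB θ ↔ Infers (I Y) (fstar e KB) (fstar e θ)))

def DI4 (I : ∀ (X : Type) [Fintype X], InfProc X) : Prop :=
  ∀ (X Y : Type) [Fintype X] [Fintype Y] (e : Emb X Y), e.Faithful →
    ∀ KB : Set (PM X), (KB ∈ (I X).dom ↔ fstar e KB ∈ (I Y).dom)

/-- `A ⇔ B` for sets of measures. -/
def iffSet {α : Type*} (A B : Set α) : Set α := (A ∩ B) ∪ (Aᶜ ∩ Bᶜ)

def DI5 (I : ∀ (X : Type) [Fintype X], InfProc X) : Prop :=
  ∀ (X Y : Type) [Fintype X] [Fintype Y] (KB : Set (PM (X × Y))) (e : Emb X Y),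
    e.Faithful → KB ∈ (I (X × Y)).dom → ∀ φ₁ : Set (PM X),
      KB ∩ iffSet (liftKB Y φ₁) {μ | margSnd μ ∈ fstar e φ₁} ∈ (I (X × Y)).dom

/-- Minimal default independence. -/
def MDI (I : ∀ (X : Type) [Fintype X], InfProc X) : Prop :=
  ∀ (X Y : Type) [Fintype X] [Fintype Y], ∀ KB : Set (PM X), ∀ (S : Set X) (T : Set Y),
    liftKB Y KB ∈ (I (X × Y)).dom →
    Infers (I (X × Y)) (liftKB Y KB)
      {μ | μ.prob (S ×ˢ T) = μ.prob (S ×ˢ (Set.univ : Set Y)) * μ.prob ((Set.univ : Set X) ×ˢ T)}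

/-- `KB` depends only on `S₁, …, S_k`. -/
def DependsOnly {X : Type} [Fintype X] {k : ℕ} (KB : Set (PM X)) (S : Fin k → Set X) : Prop :=
  ∀ μ μ' : PM X, (∀ i, μ.prob (S i) = μ'.prob (S i)) → (μ ∈ KB ↔ μ' ∈ KB)

/-- An atom over `S₁, …, S_k`. -/
def Atom {X : Type} {k : ℕ} (S : Fin k → Set X) (c : Fin k → Bool) : Set X :=
  ⋂ i, (if c i then S i else (S i)ᶜ)

section KL

variable {X : Type} [Fintype X]

/-- Absolute continuity of pmfs. -/
def AbsCont (μ' μ : PM X) : Prop := ∀ x, μ.pm x = 0 → μ'.pm x = 0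

/-- Relative entropy `D(μ'‖μ) ∈ [0,∞]` (it is `⊤` unless `μ' ≪ μ`). -/
noncomputable def KL (μ' μ : PM X) : EReal := by
  classical
  exact if AbsCont μ' μ then
    ((∑ x, μ'.pm x * Real.log (μ'.pm x / μ.pm x) : ℝ) : EReal)
  else ⊤

/-- The relative-entropy projection `μ|θ`. -/
def klProj (μ : PM X) (θ : Set (PM X)) : Set (PM X) :=
  {μ' | μ' ∈ θ ∧ KL μ' μ ≠ ⊤ ∧ ∀ μ'' ∈ θ, KL μ' μ ≤ KL μ'' μ}

/-- `D|θ = ⋃_{μ ∈ D} μ|θ`. -/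
def DProj (D : Set (PM X)) (θ : Set (PM X)) : Set (PM X) :=
  ⋃ μ ∈ D, klProj μ θ

end KL

section Products

variable {n : ℕ} {X : Fin n → Type} [∀ i, Fintype (X i)]

/-- The `i`-th marginal of a measure on a finite product. -/
noncomputable def margPi (μ : PM (∀ i, X i)) (i : Fin n) : PM (X i) where
  pm a := μ.prob {x | x i = a}
  nonneg a := PM.prob_nonneg _ _
  total := by
    classical
    unfold PM.prob
    rw [Finset.sum_comm]
    have h : ∀ x : (∀ i, X i),
        (∑ a, ({y : ∀ j, X j | y i = a}).indicator μ.pm x) = μ.pm x := by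
      intro x
      simp [Set.indicator_apply]
    simp only [h]
    exact μ.total

/-- `μ` is a product measure on `X₁ × ⋯ × Xₙ`. -/
def IsProdPM (μ : PM (∀ i, X i)) : Prop :=
  ∃ μi : ∀ i, PM (X i), ∀ U : ∀ i, Set (X i),
    μ.prob {x | ∀ i, x i ∈ U i} = ∏ i, (μi i).prob (U i)

end Products

/-- The set `P_Π(X)` of product measures. -/
def PPi {n : ℕ} (X : Fin n → Type) [∀ i, Fintype (X i)] : Set (PM (∀ i, X i)) :=
  {μ | IsProdPM μ}

/-- `e` is a product embedding. -/
def IsProdEmb {n : ℕ} {X Y : Fin n → Type} (e : Emb (∀ i, X i) (∀ i, Y i)) : Prop :=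
  ∃ ei : ∀ i, Emb (X i) (Y i), ∀ S : Set (∀ i, X i),
    e.f S = ⋃ x ∈ S, {y | ∀ i, y i ∈ (ei i).f {x i}}



lemma PM.ext' {X : Type} [Fintype X] {μ ν : PM X} (hpm : μ.pm = ν.pm) : μ = ν := by
  cases μ; cases ν; simpa using hpm

lemma zero_on_of_prob_eq_zero {X : Type} [Fintype X] (μ : PM X) (S : Set X)
    (hS : μ.prob S = 0) : ∀ x ∈ S, μ.pm x = 0 := by
  intro x hx
  have hnn : ∀ y ∈ Finset.univ, (0:ℝ) ≤ S.indicator μ.pm y :=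
    fun y _ => Set.indicator_apply_nonneg fun _ => μ.nonneg y
  have := (Finset.sum_eq_zero_iff_of_nonneg hnn).mp hS x (Finset.mem_univ x)
  simpa [Set.indicator_of_mem hx] using this

lemma prob_compl_eq {X : Type} [Fintype X] (μ : PM X) (S : Set X) :
    μ.prob Sᶜ = 1 - μ.prob S := by
  classical
  have key : ∀ x, S.indicator μ.pm x + Sᶜ.indicator μ.pm x = μ.pm x := by
    intro x; by_cases hx : x ∈ S <;> simp [Set.indicator_apply, hx]
  have : μ.prob S + μ.prob Sᶜ = 1 := by
    rw [PM.prob, PM.prob, ← Finset.sum_add_distrib]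
    simp only [key]
    exact μ.total
  linarith

/-- gluing two measures agreeing on the probability of `S₀` and
`S₁` into a joint measure giving probability 1 to `S₀ ⇔ S₁`. -/
theorem stmt2 {X₀ X₁ : Type} [Fintype X₀] [Fintype X₁]
    (μ0 : PM X₀) (μ1 : PM X₁) (S0 : Set X₀) (S1 : Set X₁)
    (h : μ0.prob S0 = μ1.prob S1) :
    ∃ μ2 : PM (X₀ × X₁), PM.margFst μ2 = μ0 ∧ PM.margSnd μ2 = μ1 ∧
      μ2.prob ((S0 ×ˢ S1) ∪ (S0ᶜ ×ˢ S1ᶜ)) = 1 := by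
  classical
  set p := μ0.prob S0 with hpdef
  have hp1 : μ1.prob S1 = p := h.symm
  have hpnn : 0 ≤ p := μ0.prob_nonneg S0
  have hq0 : μ0.prob S0ᶜ = 1 - p := prob_compl_eq μ0 S0
  have hq1 : μ1.prob S1ᶜ = 1 - p := by rw [prob_compl_eq, hp1]
  have hqnn : 0 ≤ 1 - p := hq0 ▸ μ0.prob_nonneg S0ᶜ
  set f : X₀ × X₁ → ℝ := fun z =>
    if z.1 ∈ S0 ∧ z.2 ∈ S1 then μ0.pm z.1 * μ1.pm z.2 / p
    else if z.1 ∉ S0 ∧ z.2 ∉ S1 then μ0.pm z.1 * μ1.pm z.2 / (1 - p) else 0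
    with hf
  have hfnn : ∀ z, 0 ≤ f z := by
    intro z
    simp only [hf]
    split_ifs with h1 h2
    · exact div_nonneg (mul_nonneg (μ0.nonneg _) (μ1.nonneg _)) hpnn
    · exact div_nonneg (mul_nonneg (μ0.nonneg _) (μ1.nonneg _)) hqnn
    · exact le_refl 0
  have hS1sum : ∑ y, (if y ∈ S1 then μ1.pm y else 0) = p := by
    have := hp1; rw [PM.prob] at this
    simpa [Set.indicator_apply] using this
  have hS1csum : ∑ y, (if y ∉ S1 then μ1.pm y else 0) = 1 - p := by
    have := hq1; rw [PM.prob] at this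
    simpa [Set.indicator_apply] using this
  have hS0sum : ∑ x, (if x ∈ S0 then μ0.pm x else 0) = p := by
    have : μ0.prob S0 = p := hpdef.symm
    rw [PM.prob] at this
    simpa [Set.indicator_apply] using this
  have hS0csum : ∑ x, (if x ∉ S0 then μ0.pm x else 0) = 1 - p := by
    have := hq0; rw [PM.prob] at this
    simpa [Set.indicator_apply] using this
  have row : ∀ x, ∑ y, f (x, y) = μ0.pm x := by
    intro x
    by_cases hx : x ∈ S0
    · have : ∀ y, f (x, y) = μ0.pm x / p * (if y ∈ S1 then μ1.pm y else 0) := by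
        intro y; simp only [hf, hx]
        by_cases hy : y ∈ S1 <;> simp [hy] <;> ring
      rw [Finset.sum_congr rfl fun y _ => this y, ← Finset.mul_sum, hS1sum]
      by_cases hp0 : p = 0
      · have := zero_on_of_prob_eq_zero μ0 S0 (hpdef ▸ hp0) x hx
        simp [this, hp0]
      · field_simp
    · have : ∀ y, f (x, y) = μ0.pm x / (1 - p) * (if y ∉ S1 then μ1.pm y else 0) := by
        intro y; simp only [hf, hx]
        by_cases hy : y ∈ S1 <;> simp [hy] <;> ring
      rw [Finset.sum_congr rfl fun y _ => this y, ← Finset.mul_sum, hS1csum]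
      by_cases hp0 : 1 - p = 0
      · have := zero_on_of_prob_eq_zero μ0 S0ᶜ (by rw [hq0, hp0]) x hx
        simp [this, hp0]
      · field_simp
  have col : ∀ y, ∑ x, f (x, y) = μ1.pm y := by
    intro y
    by_cases hy : y ∈ S1
    · have : ∀ x, f (x, y) = μ1.pm y / p * (if x ∈ S0 then μ0.pm x else 0) := by
        intro x; simp only [hf, hy]
        by_cases hx : x ∈ S0 <;> simp [hx] <;> ring
      rw [Finset.sum_congr rfl fun x _ => this x, ← Finset.mul_sum, hS0sum]
      by_cases hp0 : p = 0
      · have := zero_on_of_prob_eq_zero μ1 S1 (hp1.trans hp0) y hy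
        simp [this, hp0]
      · field_simp
    · have : ∀ x, f (x, y) = μ1.pm y / (1 - p) * (if x ∉ S0 then μ0.pm x else 0) := by
        intro x; simp only [hf, hy]
        by_cases hx : x ∈ S0 <;> simp [hx] <;> ring
      rw [Finset.sum_congr rfl fun x _ => this x, ← Finset.mul_sum, hS0csum]
      by_cases hp0 : 1 - p = 0
      · have := zero_on_of_prob_eq_zero μ1 S1ᶜ (by rw [hq1, hp0]) y hy
        simp [this, hp0]
      · field_simp
  have htotal : ∑ z, f z = 1 := by
    rw [Fintype.sum_prod_type]
    simp only [row]
    exact μ0.total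
  refine ⟨⟨f, hfnn, htotal⟩, ?_, ?_, ?_⟩
  · apply PM.ext'
    funext x
    simpa [PM.margFst] using row x
  · apply PM.ext'
    funext y
    simpa [PM.margSnd] using col y
  · rw [PM.prob]
    have : ∀ z : X₀ × X₁, ((S0 ×ˢ S1) ∪ (S0ᶜ ×ˢ S1ᶜ)).indicator f z = f z := by
      intro z
      by_cases hz : z ∈ (S0 ×ˢ S1) ∪ (S0ᶜ ×ˢ S1ᶜ)
      · exact Set.indicator_of_mem hz f
      · rw [Set.indicator_of_notMem hz]
        simp only [Set.mem_union, Set.mem_prod, Set.mem_compl_iff, not_or, not_and_or] at hz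
        simp only [hf]
        rcases hz with ⟨h1, h2⟩
        rw [if_neg, if_neg]
        · tauto
        · tauto
    rw [Finset.sum_congr rfl fun z _ => this z]
    exact htotal
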